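/- arXiv:2202.10258 — 2 statements merged into one kernel-verified Lean document; each statement's English description precedes it below -/
import Mathlib

section
/- Fix β>0 and θ∈ℝ. Then: (i) for every r>0 and t≥0, c^θ_r > −c̃^θ_t and u^θ(c^θ_r, t) = c^θ_{t+r}; (ii) for every r>0 and t>0, −c̃^θ_{t+r} > −c̃^θ_t and u^θ(−c̃^θ_{t+r}, t) = −c̃^θ_r; (iii) for every t>0, −2θ > −c̃^θ_t and u^θ(−2θ, t) = −2θ. -/
open MeasureTheory Filter

/-- `c^θ_t` from the paper, with time-scale parameter `β`. -/
noncomputable def cc (β θ t : ℝ) : ℝ :=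
  if θ = 0 then 1 / (β * t) else 2 * θ / (Real.exp (2 * β * θ * t) - 1)

/-- `c̃^θ_t` from the paper. -/
noncomputable def cct (β θ t : ℝ) : ℝ :=
  if θ = 0 then 1 / (β * t) else 2 * θ / (1 - Real.exp (-(2 * β * θ * t)))

/-- `u^θ(λ, t)` from the paper. -/
noncomputable def uu (β θ l t : ℝ) : ℝ :=
  if t = 0 then l else l * cc β θ t / (cct β θ t + l)

/-- entrance density `q^θ_t(x)`. -/
noncomputable def qe (β θ t x : ℝ) : ℝ :=
  cc β θ t * cct β θ t * Real.exp (-(cct β θ t * x))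

/-- transition density `q^θ_t(x, y)`. -/
noncomputable def qt (β θ t x y : ℝ) : ℝ :=
  x * cc β θ t * cct β θ t * Real.exp (-((x + y) * cc β θ t) - 2 * θ * y) *
    ∑' k : ℕ, (x * y * cc β θ t * cct β θ t) ^ k /
      ((Nat.factorial k : ℝ) * (Nat.factorial (k + 1) : ℝ))

/-- the space-time harmonic function `m^{α,θ}(t, z)`. -/
noncomputable def mm (β θ α t z : ℝ) : ℝ :=
  z * Real.exp (-(α / cc β θ t)) *
    ∑' i : ℕ, (α * z) ^ i * Real.exp (((i : ℝ) + 1) * (2 * β * θ * t)) /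
      ((Nat.factorial i : ℝ) * (Nat.factorial (i + 1) : ℝ))

/-- the space-time harmonic function `m̃^{α,θ}(t, z)`. -/
noncomputable def mmt (β θ α t z : ℝ) : ℝ :=
  z * Real.exp (2 * θ * z) * Real.exp (-(α / cct β θ t)) *
    ∑' i : ℕ, (α * z) ^ i * Real.exp (-(((i : ℝ) + 1) * (2 * β * θ * t))) /
      ((Nat.factorial i : ℝ) * (Nat.factorial (i + 1) : ℝ))

lemma key (β θ : ℝ) (hβ : 0 < β) (hθ : θ ≠ 0) {s : ℝ} (hs : 0 < s) :
    0 < θ * (Real.exp (2 * β * θ * s) - 1) := by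
  rcases lt_or_gt_of_ne hθ with h | h
  · have hbs := mul_pos hβ hs
    have h1 : 2 * β * θ * s < 0 := by nlinarith
    have := Real.exp_lt_one_iff.mpr h1
    nlinarith
  · have h1 : 0 < 2 * β * θ * s := by positivity
    have := Real.one_lt_exp_iff.mpr h1
    nlinarith

lemma exp_ne (β θ : ℝ) (hβ : 0 < β) (hθ : θ ≠ 0) {s : ℝ} (hs : 0 < s) :
    Real.exp (2 * β * θ * s) - 1 ≠ 0 := by
  intro h
  have := key β θ hβ hθ hs
  rw [h] at this
  simp at this

lemma cc_pos (β θ : ℝ) (hβ : 0 < β) {s : ℝ} (hs : 0 < s) : 0 < cc β θ s := by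
  unfold cc
  split_ifs with h
  · positivity
  · rcases lt_or_gt_of_ne h with h' | h'
    · have := key β θ hβ h hs
      apply div_pos_of_neg_of_neg <;> nlinarith
    · have := key β θ hβ h hs
      apply div_pos <;> nlinarith

lemma cct_eq (β θ : ℝ) (s : ℝ) (hθ : θ ≠ 0) :
    cct β θ s = cc β θ s * Real.exp (2 * β * θ * s) := by
  unfold cc cct
  rw [if_neg hθ, if_neg hθ, Real.exp_neg]
  have hE : Real.exp (2 * β * θ * s) ≠ 0 := Real.exp_ne_zero _
  rcases eq_or_ne (Real.exp (2 * β * θ * s)) 1 with h1 | h1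
  · rw [h1]; simp
  · have : 1 - (Real.exp (2 * β * θ * s))⁻¹ ≠ 0 := by
      intro h; apply h1
      field_simp at h
      linarith [h]
    field_simp

lemma cct_pos (β θ : ℝ) (hβ : 0 < β) {s : ℝ} (hs : 0 < s) : 0 < cct β θ s := by
  by_cases hθ : θ = 0
  · subst hθ; unfold cct; rw [if_pos rfl]; positivity
  · rw [cct_eq β θ s hθ]
    exact mul_pos (cc_pos β θ hβ hs) (Real.exp_pos _)

lemma cct_zero (β θ : ℝ) : cct β θ 0 = 0 := by
  unfold cct; split_ifs <;> simp

lemma cct_sub (β θ : ℝ) (hβ : 0 < β) (hθ : θ ≠ 0) {s : ℝ} (hs : 0 < s) :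
    cct β θ s - cc β θ s = 2 * θ := by
  have hE := exp_ne β θ hβ hθ hs
  rw [cct_eq β θ s hθ]
  unfold cc
  rw [if_neg hθ]
  generalize Real.exp (2 * β * θ * s) = E at hE ⊢
  field_simp

lemma cct_mono (β θ : ℝ) (hβ : 0 < β) {t r : ℝ} (ht : 0 < t) (hr : 0 < r) :
    cct β θ (t + r) < cct β θ t := by
  by_cases hθ : θ = 0
  · subst hθ; unfold cct; rw [if_pos rfl, if_pos rfl]
    exact div_lt_div_of_pos_left one_pos (by positivity) (by nlinarith)
  · unfold cct; rw [if_neg hθ, if_neg hθ]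
    rcases lt_or_gt_of_ne hθ with h | h
    · -- θ < 0 : denominators negative
      have e1 : 1 < Real.exp (-(2 * β * θ * t)) := Real.one_lt_exp_iff.mpr (by nlinarith [mul_pos hβ ht])
      have e2 : Real.exp (-(2 * β * θ * t)) < Real.exp (-(2 * β * θ * (t + r))) :=
        Real.exp_lt_exp.mpr (by nlinarith [mul_pos hβ hr])
      rw [show (2 * θ) / (1 - Real.exp (-(2 * β * θ * (t + r))))
            = (-(2 * θ)) / (Real.exp (-(2 * β * θ * (t + r))) - 1) by
            rw [show Real.exp (-(2 * β * θ * (t + r))) - 1 = -(1 - Real.exp (-(2 * β * θ * (t + r)))) by ring,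
              div_neg, neg_div, neg_neg],
          show (2 * θ) / (1 - Real.exp (-(2 * β * θ * t)))
            = (-(2 * θ)) / (Real.exp (-(2 * β * θ * t)) - 1) by
            rw [show Real.exp (-(2 * β * θ * t)) - 1 = -(1 - Real.exp (-(2 * β * θ * t))) by ring,
              div_neg, neg_div, neg_neg]]
      exact div_lt_div_of_pos_left (by linarith) (by linarith) (by linarith)
    · -- θ > 0
      have e1 : Real.exp (-(2 * β * θ * t)) < 1 := Real.exp_lt_one_iff.mpr (by nlinarith [mul_pos hβ ht])
      have e2 : Real.exp (-(2 * β * θ * (t + r))) < Real.exp (-(2 * β * θ * t)) :=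
        Real.exp_lt_exp.mpr (by nlinarith [mul_pos hβ hr])
      apply div_lt_div_of_pos_left (by linarith) (by linarith)
      linarith

lemma uu1 (β θ : ℝ) (hβ : 0 < β) {r t : ℝ} (hr : 0 < r) (ht : 0 < t) :
    uu β θ (cc β θ r) t = cc β θ (t + r) := by
  have hd : 0 < cct β θ t + cc β θ r := add_pos (cct_pos β θ hβ ht) (cc_pos β θ hβ hr)
  unfold uu
  rw [if_neg ht.ne', div_eq_iff hd.ne']
  by_cases hθ : θ = 0
  · subst hθ
    unfold cc cct
    simp only [if_pos rfl, eq_self_iff_true, if_true]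
    have hβ' : β ≠ 0 := hβ.ne'
    have htr : t + r ≠ 0 := by positivity
    field_simp
    ring
  · rw [cct_eq β θ t hθ]
    simp only [cc, hθ, if_false]
    have h1 := exp_ne β θ hβ hθ ht
    have h2 := exp_ne β θ hβ hθ hr
    have h3 : Real.exp (2 * β * θ * t) * Real.exp (2 * β * θ * r) - 1 ≠ 0 := by
      have := exp_ne β θ hβ hθ (add_pos ht hr)
      rwa [show 2 * β * θ * (t + r) = 2 * β * θ * t + 2 * β * θ * r by ring,
        Real.exp_add] at this
    rw [show 2 * β * θ * (t + r) = 2 * β * θ * t + 2 * β * θ * r by ring, Real.exp_add]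
    generalize Real.exp (2 * β * θ * t) = A at h1 h3 ⊢
    generalize Real.exp (2 * β * θ * r) = B at h2 h3 ⊢
    have h3' : B * A - 1 ≠ 0 := by rwa [mul_comm]
    field_simp
    ring

lemma uu2 (β θ : ℝ) (hβ : 0 < β) {r t : ℝ} (hr : 0 < r) (ht : 0 < t) :
    uu β θ (-cct β θ (t + r)) t = -cct β θ r := by
  have hd : 0 < cct β θ t + -cct β θ (t + r) := by
    have := cct_mono β θ hβ ht hr; linarith
  unfold uu
  rw [if_neg ht.ne', div_eq_iff hd.ne']
  by_cases hθ : θ = 0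
  · subst hθ
    unfold cc cct
    simp only [if_pos rfl, eq_self_iff_true, if_true]
    have hβ' : β ≠ 0 := hβ.ne'
    have htr : t + r ≠ 0 := by positivity
    field_simp
    ring
  · rw [cct_eq β θ t hθ, cct_eq β θ (t + r) hθ, cct_eq β θ r hθ]
    simp only [cc, hθ, if_false]
    have h1 := exp_ne β θ hβ hθ ht
    have h2 := exp_ne β θ hβ hθ hr
    have h3 : Real.exp (2 * β * θ * t) * Real.exp (2 * β * θ * r) - 1 ≠ 0 := by
      have := exp_ne β θ hβ hθ (add_pos ht hr)
      rwa [show 2 * β * θ * (t + r) = 2 * β * θ * t + 2 * β * θ * r by ring,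
        Real.exp_add] at this
    rw [show 2 * β * θ * (t + r) = 2 * β * θ * t + 2 * β * θ * r by ring, Real.exp_add]
    generalize Real.exp (2 * β * θ * t) = A at h1 h3 ⊢
    generalize Real.exp (2 * β * θ * r) = B at h2 h3 ⊢
    field_simp
    ring

lemma uu3 (β θ : ℝ) (hβ : 0 < β) {t : ℝ} (ht : 0 < t) :
    uu β θ (-(2 * θ)) t = -(2 * θ) := by
  unfold uu
  rw [if_neg ht.ne']
  by_cases hθ : θ = 0
  · subst hθ; norm_num
  · have hsub := cct_sub β θ hβ hθ ht
    have hc := cc_pos β θ hβ ht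
    rw [show cct β θ t + -(2 * θ) = cc β θ t by linarith]
    rw [mul_div_assoc, div_self hc.ne', mul_one]

lemma ineq3 (β θ : ℝ) (hβ : 0 < β) {t : ℝ} (ht : 0 < t) : 2 * θ < cct β θ t := by
  by_cases hθ : θ = 0
  · subst hθ; simpa using cct_pos β 0 hβ ht
  · rcases lt_or_gt_of_ne hθ with h | h
    · have := cct_pos β θ hβ ht; linarith
    · unfold cct
      rw [if_neg hθ]
      have e1 : Real.exp (-(2 * β * θ * t)) < 1 :=
        Real.exp_lt_one_iff.mpr (by nlinarith [mul_pos hβ ht])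
      have e0 : 0 < Real.exp (-(2 * β * θ * t)) := Real.exp_pos _
      rw [lt_div_iff₀ (by linarith)]
      nlinarith


/-- Special values of the flow `u^θ`: (i) `u^θ(c^θ_r, t) = c^θ_{t+r}`,
(ii) `u^θ(-c̃^θ_{t+r}, t) = -c̃^θ_r`, (iii) `u^θ(-2θ, t) = -2θ`,
each point lying in the admissible domain `(-c̃^θ_t, ∞)`. -/
theorem uu_special_values (β θ : ℝ) (hβ : 0 < β) :
    (∀ r : ℝ, 0 < r → ∀ t : ℝ, 0 ≤ t →
      -cct β θ t < cc β θ r ∧ uu β θ (cc β θ r) t = cc β θ (t + r)) ∧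
    (∀ r : ℝ, 0 < r → ∀ t : ℝ, 0 < t →
      -cct β θ t < -cct β θ (t + r) ∧ uu β θ (-cct β θ (t + r)) t = -cct β θ r) ∧
    (∀ t : ℝ, 0 < t →
      -cct β θ t < -(2 * θ) ∧ uu β θ (-(2 * θ)) t = -(2 * θ)) := by
  refine ⟨fun r hr t ht => ⟨?_, ?_⟩, fun r hr t ht => ⟨?_, uu2 β θ hβ hr ht⟩,
    fun t ht => ⟨?_, uu3 β θ hβ ht⟩⟩
  · rcases eq_or_lt_of_le ht with h | h
    · rw [← h, cct_zero]; simpa using cc_pos β θ hβ hr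
    · have := cct_pos β θ hβ h
      have := cc_pos β θ hβ hr
      linarith
  · rcases eq_or_lt_of_le ht with h | h
    · rw [← h]; unfold uu; rw [if_pos rfl, zero_add]
    · exact uu1 β θ hβ hr h
  · have := cct_mono β θ hβ ht hr; linarith
  · have := ineq3 β θ hβ ht; linarith
end

section
/- Fix β>0, θ∈ℝ, α>0, s>0 and z>0, and let a:(0,∞)→ℝ satisfy a_t ∼ αβ²t² as t→∞ if θ=0, and a_t ∼ α(2θ)^{−2}e^{2β|θ|t} as t→∞ if θ≠0. Then lim_{t→∞} q^θ_t(z, a_{t+s}) / q^θ_{t+s}(a_{t+s}) = e^{−2θ_− z} · m^{α,|θ|}(s,z), where θ_− = max(−θ,0). (This is the pointwise density form of the local limit in the Poisson regime: the conditional law of the CSBP at time s given Z_{t+s}=a_{t+s} converges to the m^{α,|θ|}-h-transform.) -/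
open MeasureTheory Filter

noncomputable def ff (x : ℝ) : ℝ :=
  ∑' k : ℕ, x ^ k / ((Nat.factorial k : ℝ) * (Nat.factorial (k + 1) : ℝ))

lemma ff_bound (x : ℝ) (k : ℕ) :
    |x ^ k / ((Nat.factorial k : ℝ) * (Nat.factorial (k + 1) : ℝ))| ≤ |x| ^ k / (Nat.factorial k : ℝ) := by
  have h0 : (0:ℝ) < (Nat.factorial k : ℝ) := by exact_mod_cast Nat.factorial_pos k
  have h1 : (1:ℝ) ≤ (Nat.factorial (k+1) : ℝ) := by
    exact_mod_cast Nat.one_le_iff_ne_zero.mpr (Nat.factorial_ne_zero _)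
  rw [abs_div, abs_pow, abs_of_pos (by nlinarith : (0:ℝ) < (Nat.factorial k : ℝ) * (Nat.factorial (k + 1) : ℝ))]
  gcongr
  nlinarith

lemma ff_summable (x : ℝ) :
    Summable (fun k : ℕ => x ^ k / ((Nat.factorial k : ℝ) * (Nat.factorial (k + 1) : ℝ))) := by
  apply (Real.summable_pow_div_factorial |x|).of_norm_bounded
  intro k
  rw [Real.norm_eq_abs]
  exact ff_bound x k

lemma ff_tendsto {ι : Type*} {l : Filter ι} {u : ι → ℝ} {L : ℝ}
    (h : Tendsto u l (nhds L)) : Tendsto (fun t => ff (u t)) l (nhds (ff L)) := by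
  have hb : ∀ᶠ t in l, |u t| ≤ |L| + 1 := by
    have := h.abs.eventually (eventually_le_nhds (lt_add_one |L|))
    simpa using this
  apply tendsto_tsum_of_dominated_convergence (bound := fun k : ℕ =>
      (|L| + 1) ^ k / (Nat.factorial k : ℝ))
  · exact Real.summable_pow_div_factorial _
  · intro k
    exact Tendsto.div_const ((h.pow k)) _
  · filter_upwards [hb] with t ht k
    refine (ff_bound _ _).trans ?_
    gcongr

lemma exp_div_split (A D B E C : ℝ) :
    A * Real.exp B * C / (D * Real.exp E) = A / D * Real.exp (B - E) * C := by
  rw [Real.exp_sub]; ring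

lemma key_split (β θ t T z y : ℝ) :
    qt β θ t z y / qe β θ T y
      = (z * cc β θ t * cct β θ t / (cc β θ T * cct β θ T)) *
        Real.exp ((-((z + y) * cc β θ t) - 2 * θ * y) - (-(cct β θ T * y))) *
        ff (z * y * cc β θ t * cct β θ t) := by
  rw [qt, qe, ff]
  exact exp_div_split _ _ _ _ _

lemma main_pos (β θ α s z : ℝ) (hβ : 0 < β) (hθ : 0 < θ) (hα : 0 < α)
    (hs : 0 < s) (hz : 0 < z) (a : ℝ → ℝ)
    (ha : Tendsto (fun t => a t / (α * ((2 * θ) ^ 2)⁻¹ * Real.exp (2 * β * θ * t)))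
      atTop (nhds 1)) :
    Tendsto (fun t => qt β θ t z (a (t + s)) / qe β θ (t + s) (a (t + s)))
      atTop (nhds (mm β θ α s z)) := by
  have hθ0 : θ ≠ 0 := ne_of_gt hθ
  have h2θ : (2 * θ) ≠ 0 := by positivity
  set M : ℝ := Real.exp (2 * β * θ * s) with hM
  have hM1 : 1 < M := by
    have h : Real.exp 0 < Real.exp (2 * β * θ * s) := Real.exp_lt_exp.mpr (by positivity)
    rw [hM]; simpa using h
  set e : ℝ → ℝ := fun t => Real.exp (-(2 * β * θ * t)) with he
  set r : ℝ → ℝ := fun t => a t / (α * ((2 * θ) ^ 2)⁻¹ * Real.exp (2 * β * θ * t)) with hr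
  set G : ℝ → ℝ := fun t =>
    z * M * (1 - e (t + s)) ^ 2 / (1 - e t) ^ 2 *
      Real.exp (-(2 * θ * z * e t / (1 - e t)) +
        r (t + s) * (α / (2 * θ)) * (1 - M) / ((1 - e (t + s)) * (1 - e t))) *
      ff (z * r (t + s) * α * M / (1 - e t) ^ 2) with hG
  have hee : ∀ t : ℝ, e t = M * e (t + s) := by
    intro t
    simp only [he, hM]
    rw [← Real.exp_add]
    congr 1
    ring
  have heq : ∀ᶠ t in atTop, qt β θ t z (a (t + s)) / qe β θ (t + s) (a (t + s)) = G t := by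
    filter_upwards [eventually_gt_atTop 0] with t ht
    have hT : 0 < t + s := by linarith
    have hexp : ∀ u : ℝ, Real.exp (2 * β * θ * u) = (e u)⁻¹ := by
      intro u; rw [he]; simp [← Real.exp_neg]
    have het1 : e t < 1 := by
      rw [he]
      have : (0:ℝ) < 2 * β * θ * t := by positivity
      exact Real.exp_lt_one_iff.mpr (by linarith)
    have heT1 : e (t + s) < 1 := by
      rw [he]
      have : (0:ℝ) < 2 * β * θ * (t + s) := by positivity
      exact Real.exp_lt_one_iff.mpr (by linarith)
    have het0 : (0:ℝ) < e t := Real.exp_pos _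
    have heT0 : (0:ℝ) < e (t + s) := Real.exp_pos _
    have heT0' : e (t + s) ≠ 0 := ne_of_gt heT0
    have h1t : 1 - e t ≠ 0 := sub_ne_zero_of_ne (ne_of_lt het1).symm
    have h1T : 1 - e (t + s) ≠ 0 := sub_ne_zero_of_ne (ne_of_lt heT1).symm
    have het' : e t = M * e (t + s) := hee t
    have h1t' : (1 : ℝ) - M * e (t + s) ≠ 0 := by rw [← het']; exact h1t
    have hinv : ∀ u : ℝ, (e u)⁻¹ - 1 = (1 - e u) / e u := by
      intro u
      have : e u ≠ 0 := ne_of_gt (Real.exp_pos _)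
      field_simp
    have hccT : cc β θ t = 2 * θ * e t / (1 - e t) := by
      rw [cc, if_neg hθ0, hexp t, hinv t, div_div_eq_mul_div]
    have hccTT : cc β θ (t + s) = 2 * θ * e (t + s) / (1 - e (t + s)) := by
      rw [cc, if_neg hθ0, hexp (t + s), hinv (t + s), div_div_eq_mul_div]
    have hcctT : cct β θ t = 2 * θ / (1 - e t) := by
      rw [cct, if_neg hθ0]
    have hcctTT : cct β θ (t + s) = 2 * θ / (1 - e (t + s)) := by
      rw [cct, if_neg hθ0]
    have hy : a (t + s) = r (t + s) * (α * ((2 * θ) ^ 2)⁻¹ * (e (t + s))⁻¹) := by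
      rw [hr]
      simp only
      rw [hexp (t + s)]
      rw [div_mul_cancel₀]
      positivity
    have hpre : z * (2 * θ * e t / (1 - e t)) * (2 * θ / (1 - e t)) /
        (2 * θ * e (t + s) / (1 - e (t + s)) * (2 * θ / (1 - e (t + s))))
        = z * M * (1 - e (t + s)) ^ 2 / (1 - e t) ^ 2 := by
      rw [het']
      field_simp
    have hB : (-((z + r (t + s) * (α * ((2 * θ) ^ 2)⁻¹ * (e (t + s))⁻¹)) * (2 * θ * e t / (1 - e t))) -
          2 * θ * (r (t + s) * (α * ((2 * θ) ^ 2)⁻¹ * (e (t + s))⁻¹))) -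
          -(2 * θ / (1 - e (t + s)) * (r (t + s) * (α * ((2 * θ) ^ 2)⁻¹ * (e (t + s))⁻¹)))
        = -(2 * θ * z * e t / (1 - e t)) +
          r (t + s) * (α / (2 * θ)) * (1 - M) / ((1 - e (t + s)) * (1 - e t)) := by
      rw [het']
      have h1t'' : (1:ℝ) - e (t + s) * M ≠ 0 := by rw [mul_comm]; exact h1t'
      field_simp
      ring
    have hw : z * (r (t + s) * (α * ((2 * θ) ^ 2)⁻¹ * (e (t + s))⁻¹)) * (2 * θ * e t / (1 - e t)) *
          (2 * θ / (1 - e t))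
        = z * r (t + s) * α * M / (1 - e t) ^ 2 := by
      rw [het']
      field_simp
    rw [key_split, hccT, hccTT, hcctT, hcctTT, hy, hpre, hB, hw, hG]
  -- limits
  have hlin : Tendsto (fun t : ℝ => 2 * β * θ * t) atTop atTop :=
    Tendsto.const_mul_atTop (by positivity) tendsto_id
  have het0 : Tendsto e atTop (nhds 0) := by
    rw [he]
    exact Real.tendsto_exp_neg_atTop_nhds_zero.comp hlin
  have hshift : Tendsto (fun t : ℝ => t + s) atTop atTop :=
    tendsto_atTop_add_const_right atTop s tendsto_id
  have heT : Tendsto (fun t : ℝ => e (t + s)) atTop (nhds 0) := het0.comp hshift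
  have hr' : Tendsto (fun t : ℝ => r (t + s)) atTop (nhds 1) := ha.comp hshift
  have hGlim : Tendsto G atTop (nhds
      (z * M * (1 - (0:ℝ)) ^ 2 / (1 - (0:ℝ)) ^ 2 *
        Real.exp (-(2 * θ * z * 0 / (1 - (0:ℝ))) +
          1 * (α / (2 * θ)) * (1 - M) / ((1 - (0:ℝ)) * (1 - (0:ℝ)))) *
        ff (z * 1 * α * M / (1 - (0:ℝ)) ^ 2))) := by
    rw [hG]
    apply Tendsto.mul
    apply Tendsto.mul
    · exact (tendsto_const_nhds.mul ((tendsto_const_nhds.sub heT).pow 2)).div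
        ((tendsto_const_nhds.sub het0).pow 2) (by norm_num)
    · refine (Real.continuous_exp.tendsto _).comp ?_
      refine Tendsto.add ?_ ?_
      · exact (((tendsto_const_nhds.mul het0).div (tendsto_const_nhds.sub het0) (by norm_num))).neg
      · exact ((hr'.mul tendsto_const_nhds).mul tendsto_const_nhds).div
          ((tendsto_const_nhds.sub heT).mul (tendsto_const_nhds.sub het0)) (by norm_num)
    · exact ff_tendsto ((((tendsto_const_nhds.mul hr').mul tendsto_const_nhds).mul
        tendsto_const_nhds).div ((tendsto_const_nhds.sub het0).pow 2) (by norm_num))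
  have hval : z * M * (1 - (0:ℝ)) ^ 2 / (1 - (0:ℝ)) ^ 2 *
        Real.exp (-(2 * θ * z * 0 / (1 - (0:ℝ))) +
          1 * (α / (2 * θ)) * (1 - M) / ((1 - (0:ℝ)) * (1 - (0:ℝ)))) *
        ff (z * 1 * α * M / (1 - (0:ℝ)) ^ 2) = mm β θ α s z := by
    have hcs : cc β θ s = 2 * θ / (M - 1) := by
      rw [cc, if_neg hθ0, ← hM]
    have hts : (∑' i : ℕ, (α * z) ^ i * Real.exp (((i : ℝ) + 1) * (2 * β * θ * s)) /
          ((Nat.factorial i : ℝ) * (Nat.factorial (i + 1) : ℝ)))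
        = M * ff (α * z * M) := by
      rw [ff, ← tsum_mul_left]
      refine tsum_congr fun i => ?_
      have hMi : Real.exp (((i : ℝ) + 1) * (2 * β * θ * s)) = M ^ (i + 1) := by
        rw [hM, ← Real.exp_nat_mul]
        congr 1
        push_cast
        ring
      rw [hMi, mul_pow, pow_succ]
      ring
    rw [mm, hcs, hts]
    rw [show z * 1 * α * M / (1 - (0:ℝ)) ^ 2 = α * z * M by ring]
    rw [show (-(2 * θ * z * 0 / (1 - (0:ℝ))) +
          1 * (α / (2 * θ)) * (1 - M) / ((1 - (0:ℝ)) * (1 - (0:ℝ)))) = -(α / (2 * θ / (M - 1))) by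
      rw [div_div_eq_mul_div]; ring]
    ring
  rw [← hval]
  have heq' : (fun t => qt β θ t z (a (t + s)) / qe β θ (t + s) (a (t + s))) =ᶠ[atTop] G := heq
  exact Tendsto.congr' heq'.symm hGlim


lemma cc_neg (β θ u : ℝ) (hθ : θ ≠ 0) : cc β θ u = cct β (-θ) u := by
  rw [cc, cct, if_neg hθ, if_neg (neg_ne_zero.mpr hθ)]
  rw [show -(2 * β * -θ * u) = 2 * β * θ * u by ring]
  rw [show (2:ℝ) * -θ = -(2 * θ) by ring,
    show (1:ℝ) - Real.exp (2 * β * θ * u) = -(Real.exp (2 * β * θ * u) - 1) by ring,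
    neg_div_neg_eq]

lemma cct_neg (β θ u : ℝ) (hθ : θ ≠ 0) : cct β θ u = cc β (-θ) u := by
  have h := cc_neg β (-θ) u (neg_ne_zero.mpr hθ)
  rw [neg_neg] at h
  exact h.symm

lemma cct_sub_cc (β θ u : ℝ) (hβ : 0 < β) (hθ : 0 < θ) (hu : 0 < u) :
    cct β θ u = cc β θ u + 2 * θ := by
  rw [cc, cct, if_neg (ne_of_gt hθ), if_neg (ne_of_gt hθ)]
  have hE1 : 1 < Real.exp (2 * β * θ * u) := by
    have h : Real.exp 0 < Real.exp (2 * β * θ * u) := Real.exp_lt_exp.mpr (by positivity)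
    simpa using h
  have hE0 : Real.exp (2 * β * θ * u) ≠ 0 := Real.exp_ne_zero _
  have hEs : Real.exp (2 * β * θ * u) - 1 ≠ 0 := by linarith
  rw [Real.exp_neg]
  have h3 : 1 - (Real.exp (2 * β * θ * u))⁻¹ ≠ 0 := by
    have : (Real.exp (2 * β * θ * u))⁻¹ < 1 := by
      rw [inv_lt_one_iff₀]; right; exact hE1
    linarith
  rw [eq_comm, div_add' _ _ _ hEs, div_eq_div_iff hEs h3]
  field_simp
  ring

lemma main_zero (β α s z : ℝ) (hβ : 0 < β) (hα : 0 < α)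
    (hs : 0 < s) (hz : 0 < z) (a : ℝ → ℝ)
    (ha : Tendsto (fun t => a t / (α * β ^ 2 * t ^ 2)) atTop (nhds 1)) :
    Tendsto (fun t => qt β 0 t z (a (t + s)) / qe β 0 (t + s) (a (t + s)))
      atTop (nhds (mm β 0 α s z)) := by
  set r : ℝ → ℝ := fun t => a t / (α * β ^ 2 * t ^ 2) with hr
  set G : ℝ → ℝ := fun t =>
    z * ((t + s) / t) ^ 2 *
      Real.exp (-(z * (1 / (β * t))) - r (t + s) * α * β * s * ((t + s) / t)) *
      ff (z * r (t + s) * α * ((t + s) / t) ^ 2) with hG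
  have heq : ∀ᶠ t in atTop, qt β 0 t z (a (t + s)) / qe β 0 (t + s) (a (t + s)) = G t := by
    filter_upwards [eventually_gt_atTop 0] with t ht
    have hT : 0 < t + s := by linarith
    have ht0 : t ≠ 0 := ne_of_gt ht
    have hT0 : t + s ≠ 0 := ne_of_gt hT
    have hβ0 : β ≠ 0 := ne_of_gt hβ
    have hcc : ∀ u : ℝ, cc β 0 u = 1 / (β * u) := fun u => by rw [cc, if_pos rfl]
    have hcct : ∀ u : ℝ, cct β 0 u = 1 / (β * u) := fun u => by rw [cct, if_pos rfl]
    have hy : a (t + s) = r (t + s) * (α * β ^ 2 * (t + s) ^ 2) := by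
      rw [hr]; simp only
      rw [div_mul_cancel₀]
      positivity
    have hpre : z * (1 / (β * t)) * (1 / (β * t)) / (1 / (β * (t + s)) * (1 / (β * (t + s))))
        = z * ((t + s) / t) ^ 2 := by
      field_simp
    have hB : (-((z + r (t + s) * (α * β ^ 2 * (t + s) ^ 2)) * (1 / (β * t))) -
          2 * 0 * (r (t + s) * (α * β ^ 2 * (t + s) ^ 2))) -
          -(1 / (β * (t + s)) * (r (t + s) * (α * β ^ 2 * (t + s) ^ 2)))
        = -(z * (1 / (β * t))) - r (t + s) * α * β * s * ((t + s) / t) := by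
      field_simp
      ring
    have hw : z * (r (t + s) * (α * β ^ 2 * (t + s) ^ 2)) * (1 / (β * t)) * (1 / (β * t))
        = z * r (t + s) * α * ((t + s) / t) ^ 2 := by
      field_simp
    rw [key_split, hcc t, hcc (t + s), hcct t, hcct (t + s), hy, hpre, hB, hw, hG]
  have hshift : Tendsto (fun t : ℝ => t + s) atTop atTop :=
    tendsto_atTop_add_const_right atTop s tendsto_id
  have hr' : Tendsto (fun t : ℝ => r (t + s)) atTop (nhds 1) := ha.comp hshift
  have hq : Tendsto (fun t : ℝ => (t + s) / t) atTop (nhds 1) := by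
    have h1 : Tendsto (fun t : ℝ => 1 + s / t) atTop (nhds (1 + 0)) :=
      tendsto_const_nhds.add (tendsto_const_nhds.div_atTop tendsto_id)
    rw [add_zero] at h1
    refine Tendsto.congr' ?_ h1
    filter_upwards [eventually_gt_atTop 0] with t ht
    field_simp
  have hb : Tendsto (fun t : ℝ => 1 / (β * t)) atTop (nhds 0) :=
    tendsto_const_nhds.div_atTop (Tendsto.const_mul_atTop hβ tendsto_id)
  have hGlim : Tendsto G atTop (nhds
      (z * (1:ℝ) ^ 2 * Real.exp (-(z * 0) - 1 * α * β * s * 1) * ff (z * 1 * α * (1:ℝ) ^ 2))) := by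
    rw [hG]
    apply Tendsto.mul
    apply Tendsto.mul
    · exact tendsto_const_nhds.mul (hq.pow 2)
    · refine (Real.continuous_exp.tendsto _).comp ?_
      exact ((tendsto_const_nhds.mul hb).neg).sub
        ((((hr'.mul tendsto_const_nhds).mul tendsto_const_nhds).mul tendsto_const_nhds).mul hq)
    · exact ff_tendsto (((tendsto_const_nhds.mul hr').mul tendsto_const_nhds).mul (hq.pow 2))
  have hval : z * (1:ℝ) ^ 2 * Real.exp (-(z * 0) - 1 * α * β * s * 1) * ff (z * 1 * α * (1:ℝ) ^ 2)
      = mm β 0 α s z := by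
    have hcs : cc β 0 s = 1 / (β * s) := by rw [cc, if_pos rfl]
    have hts : (∑' i : ℕ, (α * z) ^ i * Real.exp (((i : ℝ) + 1) * (2 * β * 0 * s)) /
          ((Nat.factorial i : ℝ) * (Nat.factorial (i + 1) : ℝ)))
        = ff (α * z) := by
      rw [ff]
      refine tsum_congr fun i => ?_
      rw [show ((i : ℝ) + 1) * (2 * β * 0 * s) = 0 by ring, Real.exp_zero, mul_one]
    rw [mm, hcs, hts]
    rw [show z * 1 * α * (1:ℝ) ^ 2 = α * z by ring]
    rw [show (-(z * 0) - 1 * α * β * s * 1) = -(α / (1 / (β * s))) by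
      rw [div_div_eq_mul_div]; ring]
    ring
  rw [← hval]
  have heq' : (fun t => qt β 0 t z (a (t + s)) / qe β 0 (t + s) (a (t + s))) =ᶠ[atTop] G := heq
  exact Tendsto.congr' heq'.symm hGlim

/-- Pointwise density form of the local limit in the Poisson regime: if
`a_t ∼ αβ²t²` (case `θ = 0`) or `a_t ∼ α(2θ)⁻² e^{2β|θ|t}` (case `θ ≠ 0`) as `t → ∞`,
then for `s > 0` and `z > 0`,
`q^θ_t(z, a_{t+s}) / q^θ_{t+s}(a_{t+s}) → e^{-2θ₋z} m^{α,|θ|}(s, z)` as `t → ∞`. -/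
theorem poisson_regime_local_limit (β θ α s z : ℝ) (hβ : 0 < β) (hα : 0 < α)
    (hs : 0 < s) (hz : 0 < z) (a : ℝ → ℝ)
    (ha0 : θ = 0 →
      Filter.Tendsto (fun t => a t / (α * β ^ 2 * t ^ 2)) Filter.atTop (nhds 1))
    (ha1 : θ ≠ 0 →
      Filter.Tendsto (fun t => a t / (α * ((2 * θ) ^ 2)⁻¹ * Real.exp (2 * β * |θ| * t)))
        Filter.atTop (nhds 1)) :
    Filter.Tendsto (fun t => qt β θ t z (a (t + s)) / qe β θ (t + s) (a (t + s)))
      Filter.atTop (nhds (Real.exp (-(2 * max (-θ) 0 * z)) * mm β |θ| α s z)) := by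
  rcases lt_trichotomy θ 0 with hθn | h0 | hθp
  · -- θ < 0
    have hθ0 : θ ≠ 0 := ne_of_lt hθn
    have hτ : 0 < -θ := neg_pos.mpr hθn
    have ha' := ha1 hθ0
    simp only [abs_of_neg hθn, show ((2 * θ) ^ 2 : ℝ) = (2 * -θ) ^ 2 from by ring] at ha'
    have hpos := main_pos β (-θ) α s z hβ hτ hα hs hz a ha'
    have hlim := hpos.const_mul (Real.exp (-(2 * -θ * z)))
    rw [show max (-θ) 0 = -θ from max_eq_left (by linarith), abs_of_neg hθn]
    have hev : ∀ᶠ t in atTop,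
        Real.exp (-(2 * -θ * z)) * (qt β (-θ) t z (a (t + s)) / qe β (-θ) (t + s) (a (t + s)))
          = qt β θ t z (a (t + s)) / qe β θ (t + s) (a (t + s)) := by
      filter_upwards [eventually_gt_atTop 0] with t ht
      have hT : 0 < t + s := by linarith
      have hdt := cct_sub_cc β (-θ) t hβ hτ ht
      have hdT := cct_sub_cc β (-θ) (t + s) hβ hτ hT
      rw [key_split, key_split, cc_neg β θ t hθ0, cc_neg β θ (t + s) hθ0,
        cct_neg β θ t hθ0, cct_neg β θ (t + s) hθ0, hdt, hdT]
      rw [show z * a (t + s) * (cc β (-θ) t + 2 * -θ) * cc β (-θ) t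
            = z * a (t + s) * cc β (-θ) t * (cc β (-θ) t + 2 * -θ) by ring]
      rw [show (-((z + a (t + s)) * (cc β (-θ) t + 2 * -θ)) - 2 * θ * a (t + s)) -
            -(cc β (-θ) (t + s) * a (t + s))
          = -(2 * -θ * z) + ((-((z + a (t + s)) * cc β (-θ) t) - 2 * -θ * a (t + s)) -
            -((cc β (-θ) (t + s) + 2 * -θ) * a (t + s))) by ring, Real.exp_add]
      ring
    exact Tendsto.congr' hev hlim
  · -- θ = 0
    subst h0
    simp only [neg_zero, max_self, mul_zero, zero_mul, Real.exp_zero, one_mul, abs_zero]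
    exact main_zero β α s z hβ hα hs hz a (ha0 rfl)
  · -- θ > 0
    have hθ0 : θ ≠ 0 := ne_of_gt hθp
    have ha' := ha1 hθ0
    simp only [abs_of_pos hθp] at ha'
    rw [show max (-θ) 0 = 0 from max_eq_right (by linarith), abs_of_pos hθp]
    rw [show -(2 * (0:ℝ) * z) = 0 by ring, Real.exp_zero, one_mul]
    exact main_pos β θ α s z hβ hθp hα hs hz a ha'
end
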